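/- Koszul kernel nontriviality: let ℓ₀,…,ℓ_s be linear forms on K^{n_z+1} (s ≥ n_z) with a common nonzero root α. Then the (s−n_z+1)-th Koszul differential of (ℓ₀,…,ℓ_s), restricted to its degree-0 strand ∧^{s−n_z+1} K^{s+1} → S(1) ⊗ ∧^{s−n_z} K^{s+1} given by e_{I} ↦ Σⱼ (−1)^{j−1} ℓ_{I_j} ⊗ e_{I∖{I_j}}, has a nontrivial kernel. -/

import Mathlib

open Finset Matrix

section KoszulAux

lemma koszulAux_orderEmb_lt_iff {α : Type*} [LinearOrder α] {J : Finset α} {k : ℕ}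
    (hJ : J.card = k) {i : α} (hi : i ∉ J) (c : Fin k) :
    J.orderEmbOfFin hJ c < i ↔ (c : ℕ) < (J.filter (· < i)).card := by
  constructor
  · intro h
    have hsub : (Finset.Iic c).image (J.orderEmbOfFin hJ) ⊆ J.filter (· < i) := by
      intro x hx
      obtain ⟨d, hd, rfl⟩ := Finset.mem_image.1 hx
      exact Finset.mem_filter.2 ⟨Finset.orderEmbOfFin_mem _ _ _,
        lt_of_le_of_lt ((J.orderEmbOfFin hJ).monotone (Finset.mem_Iic.1 hd)) h⟩
    have hcard := Finset.card_le_card hsub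
    rw [Finset.card_image_of_injective _ (J.orderEmbOfFin hJ).injective, Fin.card_Iic] at hcard
    omega
  · intro h
    by_contra hlt
    push_neg at hlt
    have hne : i ≠ J.orderEmbOfFin hJ c := fun he => hi (he ▸ Finset.orderEmbOfFin_mem J hJ c)
    have hgt : i < J.orderEmbOfFin hJ c := lt_of_le_of_ne hlt hne
    have hsub : J.filter (· < i) ⊆ (Finset.Iio c).image (J.orderEmbOfFin hJ) := by
      intro x hx
      obtain ⟨hxJ, hxi⟩ := Finset.mem_filter.1 hx
      have hr : x ∈ Set.range (J.orderEmbOfFin hJ) := by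
        rw [Finset.range_orderEmbOfFin]; exact hxJ
      obtain ⟨d, rfl⟩ := hr
      refine Finset.mem_image.2 ⟨d, Finset.mem_Iio.2 ?_, rfl⟩
      by_contra hdc
      push_neg at hdc
      exact absurd (lt_of_le_of_lt ((J.orderEmbOfFin hJ).monotone hdc)
        (lt_trans hxi hgt)) (lt_irrefl _)
    have hcard := Finset.card_le_card hsub
    have hle := Finset.card_image_le (f := (J.orderEmbOfFin hJ)) (s := Finset.Iio c)
    rw [Fin.card_Iio] at hle
    omega

lemma koszulAux_insert_orderEmb {α : Type*} [LinearOrder α] [DecidableEq α] {J : Finset α} {k : ℕ}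
    (hJ : J.card = k) {i : α} (hi : i ∉ J) (hIns : (insert i J).card = k + 1) :
    ∃ hpk : (J.filter (· < i)).card < k + 1,
      (insert i J).orderEmbOfFin hIns ⟨(J.filter (· < i)).card, hpk⟩ = i ∧
      (∀ c : Fin k, (c : ℕ) < (J.filter (· < i)).card →
        (insert i J).orderEmbOfFin hIns c.castSucc = J.orderEmbOfFin hJ c) ∧
      (∀ c : Fin k, (J.filter (· < i)).card ≤ (c : ℕ) →
        (insert i J).orderEmbOfFin hIns c.succ = J.orderEmbOfFin hJ c) := by
  set p := (J.filter (· < i)).card with hp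
  have hpk : p ≤ k := by
    have := Finset.card_filter_le J (· < i)
    omega
  refine ⟨by omega, ?_⟩
  set f : Fin (k + 1) → α := fun d =>
    if h : (d : ℕ) < p then J.orderEmbOfFin hJ ⟨d, by omega⟩
    else if h2 : (d : ℕ) = p then i
    else J.orderEmbOfFin hJ ⟨(d : ℕ) - 1, by have := d.isLt; omega⟩ with hf
  have hfs : ∀ d, f d ∈ insert i J := by
    intro d
    rw [hf]
    dsimp only
    split_ifs with h1 h2
    · exact Finset.mem_insert_of_mem (Finset.orderEmbOfFin_mem _ _ _)
    · exact Finset.mem_insert_self _ _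
    · exact Finset.mem_insert_of_mem (Finset.orderEmbOfFin_mem _ _ _)
  have hmono : StrictMono f := by
    intro d1 d2 hlt
    have hlt' : (d1 : ℕ) < (d2 : ℕ) := hlt
    rw [hf]
    dsimp only
    split_ifs with h1 h3 h4 h2 h3 h4 h3 h4
    · exact (J.orderEmbOfFin hJ).strictMono (Fin.mk_lt_mk.2 hlt')
    · exact (koszulAux_orderEmb_lt_iff hJ hi _).2 h1
    · refine (J.orderEmbOfFin hJ).strictMono ?_
      show (d1 : ℕ) < (d2 : ℕ) - 1
      omega
    · omega
    · omega
    · have hd2 : ((d2 : ℕ)) - 1 < k := by have := d2.isLt; omega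
      have hge : ¬ (J.orderEmbOfFin hJ ⟨(d2 : ℕ) - 1, hd2⟩ < i) := by
        rw [koszulAux_orderEmb_lt_iff hJ hi]
        show ¬ ((d2 : ℕ) - 1 < p)
        omega
      have hne : i ≠ J.orderEmbOfFin hJ ⟨(d2 : ℕ) - 1, hd2⟩ :=
        fun he => hi (he ▸ Finset.orderEmbOfFin_mem _ _ _)
      exact lt_of_le_of_ne (not_lt.1 hge) hne
    · omega
    · omega
    · refine (J.orderEmbOfFin hJ).strictMono ?_
      show (d1 : ℕ) - 1 < (d2 : ℕ) - 1
      omega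
  have huniq : f = ⇑((insert i J).orderEmbOfFin hIns) :=
    Finset.orderEmbOfFin_unique hIns hfs hmono
  refine ⟨?_, ?_, ?_⟩
  · rw [← congrFun huniq ⟨p, by omega⟩, hf]
    dsimp only
    rw [dif_neg (lt_irrefl p), dif_pos rfl]
  · intro c hc
    rw [← congrFun huniq c.castSucc, hf]
    dsimp only
    rw [dif_pos (show ((c.castSucc : ℕ)) < p from hc)]
    exact congrArg _ (by ext; simp)
  · intro c hc
    have h1 : ¬ ((c.succ : ℕ) < p) := by simp [Fin.val_succ]; omega
    have h2 : ¬ ((c.succ : ℕ) = p) := by simp [Fin.val_succ]; omega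
    rw [← congrFun huniq c.succ, hf]
    dsimp only
    rw [dif_neg h1, dif_neg h2]
    exact congrArg _ (by ext; simp)

lemma koszulAux_exists_cols {K : Type*} [Field K] {η : Type*} [Fintype η] [DecidableEq η] :
    ∀ {m : ℕ} {w : Fin m → η → K}, LinearIndependent K w →
      ∃ g : Fin m → η, Function.Injective g ∧ (Matrix.of fun r c => w r (g c)).det ≠ 0 := by
  intro m
  induction m with
  | zero =>
    intro w _
    exact ⟨Fin.elim0, fun a => a.elim0, by rw [Matrix.det_fin_zero]; exact one_ne_zero⟩
  | succ m ih =>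
    intro w hw
    have hw' : LinearIndependent K (w ∘ Fin.castSucc) :=
      hw.comp _ (Fin.castSucc_injective m)
    obtain ⟨g', hg'inj, hg'det⟩ := ih hw'
    have key : ∃ i, i ∉ Set.range g' ∧
        (Matrix.of fun r c => w r ((Fin.snoc g' i : Fin (m+1) → η) c)).det ≠ 0 := by
      by_contra hcon
      push_neg at hcon
      have hall : ∀ i,
          (Matrix.of fun r c => w r ((Fin.snoc g' i : Fin (m+1) → η) c)).det = 0 := by
        intro i
        by_cases hir : i ∈ Set.range g'
        · obtain ⟨c0, rfl⟩ := hir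
          refine Matrix.det_zero_of_column_eq (i := c0.castSucc) (j := Fin.last m)
            (Fin.castSucc_lt_last c0).ne ?_
          intro r
          simp [Fin.snoc_castSucc, Fin.snoc_last]
        · exact hcon i hir
      set C : Fin (m + 1) → Matrix (Fin m) (Fin m) K :=
        fun r => Matrix.of fun r' c => w (r.succAbove r') (g' c) with hC
      have hexp : ∀ i, ∑ r : Fin (m + 1),
          (-1 : K) ^ ((r : ℕ) + m) * w r i * (C r).det = 0 := by
        intro i
        have h := Matrix.det_succ_column
          (Matrix.of fun r c => w r ((Fin.snoc g' i : Fin (m+1) → η) c)) (Fin.last m)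
        rw [hall i] at h
        have hmin : ∀ r : Fin (m + 1),
            ((Matrix.of fun r c => w r ((Fin.snoc g' i : Fin (m+1) → η) c)).submatrix
              r.succAbove (Fin.last m).succAbove) = C r := by
          intro r
          ext r' c
          simp [hC, Matrix.submatrix_apply, Fin.succAbove_last, Fin.snoc_castSucc]
        rw [Finset.sum_congr rfl (fun r _ => by rw [hmin r])] at h
        simpa [Fin.val_last] using h.symm
      set a : Fin (m + 1) → K := fun r => (-1 : K) ^ ((r : ℕ) + m) * (C r).det with ha
      have hsum : ∑ r, a r • w r = 0 := by
        funext i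
        have := hexp i
        simpa [ha, Finset.sum_apply, mul_comm, mul_assoc, mul_left_comm] using this
      have hzero := Fintype.linearIndependent_iff.1 hw a hsum (Fin.last m)
      have hClast : C (Fin.last m) = Matrix.of fun r c => w r.castSucc (g' c) := by
        ext r c; simp [hC, Fin.succAbove_last]
      rw [ha] at hzero
      dsimp only at hzero
      rw [hClast] at hzero
      have hpow : ((-1 : K) ^ (((Fin.last m) : ℕ) + m)) ≠ 0 := pow_ne_zero _ (by norm_num)
      have : (Matrix.of fun r c => w r.castSucc (g' c)).det = 0 :=
        (mul_eq_zero.1 hzero).resolve_left hpow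
      exact hg'det (by simpa [Function.comp] using this)
    obtain ⟨i, hi, hdet⟩ := key
    refine ⟨(Fin.snoc g' i : Fin (m+1) → η), ?_, hdet⟩
    intro a b hab
    rcases Fin.eq_castSucc_or_eq_last a with ⟨a', rfl⟩ | rfl <;>
      rcases Fin.eq_castSucc_or_eq_last b with ⟨b', rfl⟩ | rfl
    · rw [Fin.snoc_castSucc, Fin.snoc_castSucc] at hab
      exact congrArg _ (hg'inj hab)
    · rw [Fin.snoc_castSucc, Fin.snoc_last] at hab
      exact absurd ⟨a', hab⟩ hi
    · rw [Fin.snoc_last, Fin.snoc_castSucc] at hab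
      exact absurd ⟨b', hab.symm⟩ hi
    · rfl

lemma koszulAux_exists_kernel_family {K : Type*} [Field K] {s n_z : ℕ} (hsn : n_z ≤ s)
    (ℓ : Fin (s + 1) → Module.Dual K (Fin (n_z + 1) → K))
    (α : Fin (n_z + 1) → K) (hα : α ≠ 0) (hroot : ∀ i, ℓ i α = 0) :
    ∃ w : Fin (s - n_z + 1) → (Fin (s + 1) → K),
      LinearIndependent K w ∧ ∀ j, ∑ i, w j i • ℓ i = 0 := by
  classical
  set T : (Fin (s + 1) → K) →ₗ[K] Module.Dual K (Fin (n_z + 1) → K) :=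
    Fintype.linearCombination K ℓ with hT
  obtain ⟨r, hr⟩ : ∃ r, α r ≠ 0 := by
    by_contra h; push_neg at h; exact hα (funext h)
  set φ : Module.Dual K (Module.Dual K (Fin (n_z + 1) → K)) :=
    Module.Dual.eval K (Fin (n_z + 1) → K) α with hφ
  have hφsurj : Function.Surjective φ := by
    intro c
    refine ⟨(c * (α r)⁻¹) • LinearMap.proj r, ?_⟩
    show (c * (α r)⁻¹) * α r = c
    rw [mul_assoc, inv_mul_cancel₀ hr, mul_one]
  have hrange : LinearMap.range T ≤ LinearMap.ker φ := by
    rintro _ ⟨v, rfl⟩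
    simp only [LinearMap.mem_ker, hφ, Module.Dual.eval_apply, hT,
      Fintype.linearCombination_apply, LinearMap.sum_apply, LinearMap.smul_apply, hroot,
      smul_zero, Finset.sum_const_zero]
  have hdualrank : Module.finrank K (Module.Dual K (Fin (n_z + 1) → K)) = n_z + 1 := by
    rw [Subspace.dual_finrank_eq]
    simp [Module.finrank_pi]
  have hkerφ : Module.finrank K (LinearMap.ker φ) = n_z := by
    have h1 := LinearMap.finrank_range_add_finrank_ker φ
    rw [LinearMap.range_eq_top.2 hφsurj, finrank_top, Module.finrank_self, hdualrank] at h1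
    omega
  have h4 : Module.finrank K (LinearMap.range T) ≤ n_z := by
    have := Submodule.finrank_mono hrange
    rwa [hkerφ] at this
  have hrk : s - n_z + 1 ≤ Module.finrank K (LinearMap.ker T) := by
    have h2 := LinearMap.finrank_range_add_finrank_ker T
    have h3 : Module.finrank K (Fin (s + 1) → K) = s + 1 := by
      simp [Module.finrank_pi]
    rw [h3] at h2
    omega
  obtain ⟨f, hf⟩ := exists_linearIndependent_of_le_finrank hrk
  refine ⟨fun j => (f j : Fin (s + 1) → K), ?_, ?_⟩
  · exact hf.map' (LinearMap.ker T).subtype (Submodule.ker_subtype _)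
  · intro j
    have hm := (f j).2
    rw [LinearMap.mem_ker] at hm
    exact hm

end KoszulAux

/-- The degree-0 strand of the (s−n_z+1)-th Koszul differential of a family of linear forms
ℓ₀,…,ℓ_s on K^{n_z+1}: a basis element e_I (I a subset of {0,…,s} of cardinality s−n_z+1)
is mapped to Σⱼ (−1)^{j−1} ℓ_{I_j} ⊗ e_{I∖{I_j}}.  Wedge powers are represented by
coefficient functions on subsets of fixed cardinality. -/
noncomputable def koszulStrand {K : Type*} [Field K] {s n_z : ℕ}
    (ℓ : Fin (s + 1) → Module.Dual K (Fin (n_z + 1) → K))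
    (lam : {I : Finset (Fin (s + 1)) // I.card = s - n_z + 1} → K) :
    {J : Finset (Fin (s + 1)) // J.card = s - n_z} → Module.Dual K (Fin (n_z + 1) → K) :=
  fun J => ∑ i : Fin (s + 1),
    if h : i ∈ J.1 then 0
    else ((-1 : K) ^ (J.1.filter (· < i)).card * lam ⟨insert i J.1, by
      rw [Finset.card_insert_of_notMem h, J.2]⟩) • ℓ i

/-- If the linear forms have a common nonzero root and s ≥ n_z, then the degree-0 strand
of the (s−n_z+1)-th Koszul differential has nontrivial kernel. -/
theorem stmt11 {K : Type*} [Field K] {s n_z : ℕ} (hsn : n_z ≤ s)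
    (ℓ : Fin (s + 1) → Module.Dual K (Fin (n_z + 1) → K))
    (α : Fin (n_z + 1) → K) (hα : α ≠ 0) (hroot : ∀ i, ℓ i α = 0) :
    ∃ lam : {I : Finset (Fin (s + 1)) // I.card = s - n_z + 1} → K,
      lam ≠ 0 ∧ koszulStrand ℓ lam = 0 := by
  obtain ⟨w, hwind, hw0⟩ := koszulAux_exists_kernel_family hsn ℓ α hα hroot
  set lam : {I : Finset (Fin (s + 1)) // I.card = s - n_z + 1} → K := fun I =>
    (Matrix.of fun r c : Fin (s - n_z + 1) => w r (I.1.orderEmbOfFin I.2 c)).det with hlam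
  refine ⟨lam, ?_, ?_⟩
  · -- nonvanishing
    obtain ⟨g, hginj, hgdet⟩ := koszulAux_exists_cols hwind
    set I0 : Finset (Fin (s + 1)) := Finset.image g Finset.univ with hI0
    have hI0card : I0.card = s - n_z + 1 := by
      rw [hI0, Finset.card_image_of_injective _ hginj, Finset.card_univ, Fintype.card_fin]
    have hmem : ∀ c, g c ∈ I0 := fun c => Finset.mem_image.2 ⟨c, Finset.mem_univ c, rfl⟩
    have hbij : Function.Bijective (fun c => (⟨g c, hmem c⟩ : {x // x ∈ I0})) := by
      rw [Fintype.bijective_iff_injective_and_card]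
      constructor
      · intro a b hab
        exact hginj (congrArg Subtype.val hab)
      · simp [Fintype.card_coe, hI0card]
    set e : Equiv.Perm (Fin (s - n_z + 1)) :=
      (Equiv.ofBijective _ hbij).trans (I0.orderIsoOfFin hI0card).symm.toEquiv with he
    have hemb : ∀ c, I0.orderEmbOfFin hI0card (e c) = g c := by
      intro c
      show ((I0.orderIsoOfFin hI0card) (e c) : Fin (s + 1)) = g c
      rw [he]
      simp
    intro hlam0
    have h0 : (Matrix.of fun r c : Fin (s - n_z + 1) =>
        w r (I0.orderEmbOfFin hI0card c)).det = 0 := congrFun hlam0 ⟨I0, hI0card⟩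
    have hmat : (Matrix.of fun r c : Fin (s - n_z + 1) => w r (g c)) =
        (Matrix.of fun r c : Fin (s - n_z + 1) =>
          w r (I0.orderEmbOfFin hI0card c)).submatrix id e := by
      ext r c
      simp [Matrix.submatrix_apply, hemb]
    apply hgdet
    rw [hmat, Matrix.det_permute', h0, mul_zero]
  · -- the Koszul identity
    funext J
    obtain ⟨J, hJ⟩ := J
    show (∑ i : Fin (s + 1), if h : i ∈ J then 0
      else ((-1 : K) ^ (J.filter (· < i)).card * lam ⟨insert i J, by
        rw [Finset.card_insert_of_notMem h, hJ]⟩) • ℓ i) = 0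
    set R : Fin (s - n_z + 1) → K := fun j =>
      (Matrix.of fun (r c : Fin (s - n_z)) => w (j.succAbove r) (J.orderEmbOfFin hJ c)).det
      with hR
    have key : ∀ i : Fin (s + 1),
        (if h : i ∈ J then (0 : Module.Dual K (Fin (n_z + 1) → K))
          else ((-1 : K) ^ (J.filter (· < i)).card * lam ⟨insert i J, by
            rw [Finset.card_insert_of_notMem h, hJ]⟩) • ℓ i)
        = (∑ j : Fin (s - n_z + 1), (-1 : K) ^ (j : ℕ) * w j i * R j) • ℓ i := by
      intro i
      set N : Matrix (Fin (s - n_z + 1)) (Fin (s - n_z + 1)) K :=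
        Matrix.of fun r c => w r (Fin.cases i (fun c' => J.orderEmbOfFin hJ c') c) with hN
      have hNdet : N.det = ∑ j : Fin (s - n_z + 1), (-1 : K) ^ (j : ℕ) * w j i * R j := by
        rw [Matrix.det_succ_column_zero]
        refine Finset.sum_congr rfl fun j _ => ?_
        have h1 : N j 0 = w j i := by simp [hN]
        have h2 : (N.submatrix j.succAbove Fin.succ) =
            Matrix.of fun (r c : Fin (s - n_z)) =>
              w (j.succAbove r) (J.orderEmbOfFin hJ c) := by
          ext r c
          simp [hN, Matrix.submatrix_apply, Fin.cases_succ]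
        rw [h1, h2]
      by_cases hiJ : i ∈ J
      · rw [dif_pos hiJ]
        have hz : N.det = 0 := by
          obtain ⟨c0, hc0⟩ : ∃ c0, J.orderEmbOfFin hJ c0 = i := by
            have : i ∈ Set.range (J.orderEmbOfFin hJ) := by
              rw [Finset.range_orderEmbOfFin]; exact hiJ
            exact this
          refine Matrix.det_zero_of_column_eq (i := 0) (j := c0.succ)
            (Fin.succ_ne_zero c0).symm ?_
          intro r
          simp [hN, Fin.cases_succ, hc0]
        rw [← hNdet, hz, zero_smul]
      · rw [dif_neg hiJ]
        have hIns : (insert i J).card = s - n_z + 1 := by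
          rw [Finset.card_insert_of_notMem hiJ, hJ]
        obtain ⟨hpk, hA, hB, hC⟩ := koszulAux_insert_orderEmb hJ hiJ hIns
        set σ : Equiv.Perm (Fin (s - n_z + 1)) :=
          (Fin.cycleRange ⟨(J.filter (· < i)).card, hpk⟩)⁻¹ with hσ
        set Mins : Matrix (Fin (s - n_z + 1)) (Fin (s - n_z + 1)) K :=
          Matrix.of fun r c => w r ((insert i J).orderEmbOfFin hIns c) with hMins
        have hNM : N = Mins.submatrix id σ := by
          ext r c
          refine Fin.cases ?_ (fun d => ?_) c
          · have hσ0 : σ 0 = ⟨(J.filter (· < i)).card, hpk⟩ := by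
              rw [hσ, Equiv.Perm.inv_eq_iff_eq, Fin.cycleRange_self]
            simp [hN, hMins, Matrix.submatrix_apply, hσ0, hA]
          · by_cases hd : (d : ℕ) < (J.filter (· < i)).card
            · have hσd : σ d.succ = d.castSucc := by
                rw [hσ, Equiv.Perm.inv_eq_iff_eq, Fin.cycleRange_of_lt (by
                  show ((d.castSucc : ℕ)) < (J.filter (· < i)).card
                  simpa using hd), Fin.coeSucc_eq_succ]
              simp [hN, hMins, Matrix.submatrix_apply, hσd, hB d hd, Fin.cases_succ]
            · have hσd : σ d.succ = d.succ := by
                rw [hσ, Equiv.Perm.inv_eq_iff_eq, Fin.cycleRange_of_gt (by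
                  show (J.filter (· < i)).card < ((d.succ : ℕ))
                  simp [Fin.val_succ]; omega)]
              simp [hN, hMins, Matrix.submatrix_apply, hσd, hC d (not_lt.1 hd), Fin.cases_succ]
        have hsign : (Equiv.Perm.sign σ : ℤ) = (-1 : ℤ) ^ (J.filter (· < i)).card := by
          rw [hσ, Equiv.Perm.sign_inv, Fin.sign_cycleRange]
          push_cast
          ring_nf
        have hdetN : N.det = (-1 : K) ^ (J.filter (· < i)).card * Mins.det := by
          rw [hNM, Matrix.det_permute']
          congr 1
          rw [show ((Equiv.Perm.sign σ : ℤ) : K) = (((-1 : ℤ) ^ (J.filter (· < i)).card : ℤ) : K)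
            from congrArg _ hsign]
          push_cast
          ring
        rw [← hNdet, hdetN]
    rw [Finset.sum_congr rfl (fun i _ => key i)]
    have hswap : ∀ i : Fin (s + 1), (∑ j : Fin (s - n_z + 1), (-1 : K) ^ (j : ℕ) * w j i * R j) • ℓ i
        = ∑ j : Fin (s - n_z + 1), ((-1 : K) ^ (j : ℕ) * R j) • (w j i • ℓ i) := by
      intro i
      rw [Finset.sum_smul]
      refine Finset.sum_congr rfl fun j _ => ?_
      rw [smul_smul]
      congr 1
      ring
    rw [Finset.sum_congr rfl (fun i _ => hswap i), Finset.sum_comm]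
    refine Finset.sum_eq_zero fun j _ => ?_
    rw [← Finset.smul_sum, hw0 j, smul_zero]
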